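/- For the cycle graph C_n, the complemented neighborhood function N̄ is a complete interference if and only if n ≥ 5. -/

import Mathlib

theorem stmt16 (n : ℕ) (hn : 3 ≤ n) :
    (Function.Injective (fun u => ((SimpleGraph.cycleGraph n).neighborSet u)ᶜ) ∧
      (∀ u : Fin n, (((SimpleGraph.cycleGraph n).neighborSet u)ᶜ : Set (Fin n)).Nonempty) ∧
      ∀ u v : Fin n, u ≠ v →
        (((SimpleGraph.cycleGraph n).neighborSet u)ᶜ ∩
          ((SimpleGraph.cycleGraph n).neighborSet v)ᶜ).Nonempty)
    ↔ 5 ≤ n := by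
  constructor
  · rintro ⟨h1, _, h3⟩
    by_contra hlt
    push_neg at hlt
    interval_cases n
    · -- n = 3
      obtain ⟨w, hw0, hw1⟩ := h3 0 1 (by decide)
      simp only [Set.mem_compl_iff, SimpleGraph.mem_neighborSet,
        SimpleGraph.cycleGraph_adj'] at hw0 hw1
      revert hw0 hw1; fin_cases w <;> decide
    · -- n = 4
      have : (0 : Fin 4) = 2 := by
        apply h1
        simp only [SimpleGraph.cycleGraph_neighborSet]
        rw [show ((0:Fin 4)-1) = 3 by decide, show ((0:Fin 4)+1) = 1 by decide,
          show ((2:Fin 4)-1) = 1 by decide, show ((2:Fin 4)+1) = 3 by decide,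
          Set.pair_comm]
      exact absurd this (by decide)
  · intro h5
    obtain ⟨m, rfl⟩ : ∃ m, n = m + 2 := ⟨n - 2, by omega⟩
    have hne : ∀ (a : Fin (m + 2)), a + 4 ≠ a := by
      intro a h
      have : (4 : Fin (m + 2)) = 0 := by
        have := congrArg (· - a) h
        simpa [add_sub_cancel_right] using this
      rw [Fin.ext_iff] at this
      open Fin.CommRing in rw [show (4 : Fin (m+2)) = ((4 : ℕ) : Fin (m+2)) by norm_cast,
        Fin.val_natCast, Nat.mod_eq_of_lt (by omega), Fin.val_zero] at this
      omega
    refine ⟨?_, ?_, ?_⟩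
    · intro u v h
      simp only [SimpleGraph.cycleGraph_neighborSet, compl_inj_iff] at h
      have h1 : u - 1 = v - 1 ∨ u - 1 = v + 1 := by
        have : u - 1 ∈ ({v - 1, v + 1} : Set (Fin (m+2))) := h ▸ Set.mem_insert _ _
        simpa using this
      have h2 : u + 1 = v - 1 ∨ u + 1 = v + 1 := by
        have : u + 1 ∈ ({v - 1, v + 1} : Set (Fin (m+2))) := by
          rw [← h]; simp
        simpa using this
      rcases h1 with h1 | h1
      · exact sub_left_injective h1
      · rcases h2 with h2 | h2
        · exfalso
          apply hne v
          have hu : u = v + 2 := by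
            have := congrArg (· + 1) h1; simp only [sub_add_cancel, add_assoc] at this; rw [this]; open Fin.CommRing in ring
          have hv : v = u + 2 := by
            have := congrArg (· + 1) h2
            simp only [sub_add_cancel] at this
            rw [← this]; open Fin.CommRing in ring
          rw [hu] at hv
          rw [show (v : Fin (m+2)) + 4 = v + 2 + 2 by open Fin.CommRing in ring]
          exact hv.symm
        · exact add_left_injective _ h2
    · intro u
      exact ⟨u, by simp [SimpleGraph.mem_neighborSet]⟩
    · intro u v _
      have hcard : ({u - 1, u + 1, v - 1, v + 1} : Finset (Fin (m+2))).card < m + 2 := by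
        calc ({u - 1, u + 1, v - 1, v + 1} : Finset (Fin (m+2))).card ≤ 4 := by
              apply le_trans (Finset.card_insert_le _ _)
              apply Nat.succ_le_succ
              apply le_trans (Finset.card_insert_le _ _)
              apply Nat.succ_le_succ
              exact Finset.card_insert_le _ _
          _ < m + 2 := by omega
      have : (({u - 1, u + 1, v - 1, v + 1} : Finset (Fin (m+2)))ᶜ).Nonempty := by
        rw [← Finset.card_pos, Finset.card_compl, Fintype.card_fin]
        omega
      obtain ⟨w, hw⟩ := this
      simp only [Finset.mem_compl, Finset.mem_insert, Finset.mem_singleton, not_or] at hw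
      obtain ⟨hw1, hw2, hw3, hw4⟩ := hw
      have key : ∀ a : Fin (m+2), w ≠ a - 1 → w ≠ a + 1 →
          w ∈ ((SimpleGraph.cycleGraph (m+2)).neighborSet a)ᶜ := by
        intro a ha1 ha2
        simp only [Set.mem_compl_iff, SimpleGraph.mem_neighborSet, SimpleGraph.cycleGraph_adj]
        rintro (h | h)
        · exact ha1 (by rw [eq_sub_iff_add_eq, ← h]; open Fin.CommRing in ring)
        · exact ha2 (by rw [← h]; open Fin.CommRing in ring)
      exact ⟨w, key u hw1 hw2, key v hw3 hw4⟩
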